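/- Let H be a perfect group, Z a subgroup of Z(H), g an element of H, and α an automorphism of H such that α(h)·(g h g⁻¹)⁻¹ ∈ Z for every h ∈ H (i.e., α agrees with conjugation by g modulo Z). Then α equals the inner automorphism given by conjugation by g; in particular α is inner. -/

import Mathlib

/-- Let `H` be a perfect group, `Z ≤ Z(H)`, `g ∈ H`, and `α` an automorphism of
`H` agreeing with conjugation by `g` modulo `Z`.  Then `α` equals the inner
automorphism of conjugation by `g`; in particular `α` is inner. -/
theorem aut_eq_conj_of_agree_mod_center (H : Type*) [Group H]
    (hperf : commutator H = ⊤) (Z : Subgroup H) (hZ : Z ≤ Subgroup.center H)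
    (g : H) (α : MulAut H)
    (hα : ∀ h : H, α h * (g * h * g⁻¹)⁻¹ ∈ Z) :
    α = MulAut.conj g := by
  set β : MulAut H := (MulAut.conj g)⁻¹ * α with hβ
  have hβapp : ∀ h : H, β h = g⁻¹ * α h * g := by
    intro h
    rw [hβ]
    simp [MulAut.mul_apply, MulAut.inv_def, MulAut.conj_symm_apply, mul_assoc]
  have hcen : ∀ h : H, β h * h⁻¹ ∈ Subgroup.center H := by
    intro h
    have h1 : α h * (g * h * g⁻¹)⁻¹ ∈ Subgroup.center H := hZ (hα h)
    have h2 : β h * h⁻¹ = g⁻¹ * (α h * (g * h * g⁻¹)⁻¹) * (g⁻¹)⁻¹ := by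
      rw [hβapp]; group
    rw [h2]
    exact (Subgroup.center H).normal_of_characteristic.conj_mem _ h1 g⁻¹
  -- the homomorphism h ↦ β h * h⁻¹ into the center
  have hbmul : ∀ a b : H, β (a * b) * (a * b)⁻¹ = (β a * a⁻¹) * (β b * b⁻¹) := by
    intro a b
    have hb := Subgroup.mem_center_iff.mp (hcen b)
    calc β (a * b) * (a * b)⁻¹ = β a * ((β b * b⁻¹) * a⁻¹) := by
          rw [map_mul]; group
      _ = β a * (a⁻¹ * (β b * b⁻¹)) := by rw [hb a⁻¹]
      _ = (β a * a⁻¹) * (β b * b⁻¹) := by group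
  let f : H →* Subgroup.center H :=
    { toFun := fun h => ⟨β h * h⁻¹, hcen h⟩
      map_one' := by simp
      map_mul' := fun a b => Subtype.ext (hbmul a b) }
  have hker : ∀ h : H, f h = 1 := by
    have hle : Subgroup.closure (commutatorSet H) ≤ f.ker := by
      rw [Subgroup.closure_le]
      rintro x ⟨a, b, rfl⟩
      open scoped commutatorElement in
      have : f ⁅a, b⁆ = ⁅f a, f b⁆ := map_commutatorElement f a b
      rw [SetLike.mem_coe, MonoidHom.mem_ker, this]
      exact commutatorElement_eq_one_iff_commute.mpr (Subtype.ext (Subgroup.mem_center_iff.mp (f b).2 (f a : H)) : f a * f b = f b * f a)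
    intro h
    have : h ∈ f.ker := hle (by rw [← commutator_eq_closure, hperf]; trivial)
    exact this
  have hid : ∀ h : H, β h = h := by
    intro h
    have := congrArg (Subtype.val) (hker h)
    simpa [f, mul_inv_eq_one] using this
  ext h
  have := hid h
  rw [hβapp] at this
  rw [MulAut.conj_apply]
  calc α h = g * (g⁻¹ * α h * g) * g⁻¹ := by group
    _ = g * h * g⁻¹ := by rw [this]
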